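/- Let G be an infinite, locally finite, connected, vertex-transitive simple graph, and run site FPP on G with i.i.d. mean-1 exponential passage times started at a base vertex, with infected region A(t) at time t. Then there exists a constant D > 0 such that, with high probability as t → ∞, |A(t)| ≤ D^t. -/

import Mathlib

open MeasureTheory ProbabilityTheory Filter
open scoped ENNReal

/-- `G` is vertex-transitive. -/
def VertexTransitive {V : Type*} (G : SimpleGraph V) : Prop :=
  ∀ u v : V, ∃ φ : G ≃g G, φ u = v

/-- The passage time of a walk: the sum of the passage times of its vertices,
excluding the initial one. -/
noncomputable def walkTime {V : Type*} {G : SimpleGraph V} {o v : V}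
    (ω : V → ℝ) (p : G.Walk o v) : ℝ≥0∞ :=
  (p.support.tail.map fun x => ENNReal.ofReal (ω x)).sum

/-- The infection time of a vertex `v` in site FPP started at `o` with passage
times `ω`: the infimum of the passage times of walks from `o` to `v`. -/
noncomputable def infectionTime {V : Type*} (G : SimpleGraph V) (o : V)
    (ω : V → ℝ) (v : V) : ℝ≥0∞ :=
  ⨅ p : G.Walk o v, walkTime ω p

/-- The infected region at time `t`. -/
def infected {V : Type*} (G : SimpleGraph V) (o : V) (ω : V → ℝ) (t : ℝ) : Set V :=
  {v | infectionTime G o ω v ≤ ENNReal.ofReal t}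

/-! ### Auxiliary lemmas -/

lemma eden_expMeasure_Iio_le (a : ℝ) : expMeasure 1 (Set.Iio a) ≤ ENNReal.ofReal a := by
  rw [expMeasure, gammaMeasure, withDensity_apply _ measurableSet_Iio]
  calc ∫⁻ x in Set.Iio a, gammaPDF 1 1 x
      ≤ ∫⁻ x in Set.Iio a, (Set.Ici (0:ℝ)).indicator (fun _ => 1) x := by
        refine setLIntegral_mono' measurableSet_Iio fun x _ => ?_
        have hpdf : gammaPDF 1 1 x = exponentialPDF 1 x := rfl
        rw [hpdf, exponentialPDF_eq]
        by_cases hx : 0 ≤ x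
        · simp only [if_pos hx, Set.indicator_of_mem (Set.mem_Ici.mpr hx)]
          refine ENNReal.ofReal_le_one.mpr ?_
          rw [one_mul]
          calc Real.exp (-(1 * x)) ≤ Real.exp 0 := by
                apply Real.exp_le_exp.mpr; simp [hx]
            _ = 1 := Real.exp_zero
        · simp [if_neg hx]
    _ = ENNReal.ofReal a := by
        rw [lintegral_indicator measurableSet_Ici]
        simp only [lintegral_const, MeasurableSet.univ, Measure.restrict_restrict,
          measurableSet_Ici, Measure.restrict_apply, Set.univ_inter, one_mul]
        rw [Set.Ici_inter_Iio, Real.volume_Ico, sub_zero]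

lemma eden_low_measure {V : Type*} (μ : Measure (V → ℝ)) [IsProbabilityMeasure μ]
    (hdist : ∀ v : V, μ.map (fun ω => ω v) = expMeasure 1)
    (hindep : iIndepFun (fun v => fun ω : V → ℝ => ω v) μ)
    (T : Finset V) (a : ℝ) :
    μ {ω : V → ℝ | ∀ x ∈ T, ω x < a} ≤ ENNReal.ofReal a ^ T.card := by
  have hset : {ω : V → ℝ | ∀ x ∈ T, ω x < a}
      = ⋂ x ∈ T, (fun ω : V → ℝ => ω x) ⁻¹' (Set.Iio a) := by
    ext ω; simp [Set.mem_iInter]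
  rw [hset]
  have h := (iIndepFun_iff_measure_inter_preimage_eq_mul.mp hindep) T
    (sets := fun _ => Set.Iio a) (fun i _ => measurableSet_Iio)
  rw [h]
  calc ∏ x ∈ T, μ ((fun ω : V → ℝ => ω x) ⁻¹' Set.Iio a)
      ≤ ∏ _x ∈ T, ENNReal.ofReal a := by
        refine Finset.prod_le_prod' fun x _ => ?_
        rw [← Measure.map_apply (measurable_pi_apply x) measurableSet_Iio, hdist x]
        exact eden_expMeasure_Iio_le a
    _ = ENNReal.ofReal a ^ T.card := Finset.prod_const _

lemma eden_sum_small_bound {V : Type*} [DecidableEq V] (μ : Measure (V → ℝ))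
    [IsProbabilityMeasure μ]
    (hlow : ∀ (T : Finset V) (a : ℝ),
      μ {ω : V → ℝ | ∀ x ∈ T, ω x < a} ≤ ENNReal.ofReal a ^ T.card)
    (s : Finset V) (n : ℕ) (hn : s.card = n) (c : ℝ) :
    μ {ω : V → ℝ | ∑ x ∈ s, ENNReal.ofReal (ω x) < ENNReal.ofReal c}
      ≤ 2 ^ n * ENNReal.ofReal (2 * c / n) ^ (n / 2) := by
  set a : ℝ := 2 * c / n with ha
  have hincl : {ω : V → ℝ | ∑ x ∈ s, ENNReal.ofReal (ω x) < ENNReal.ofReal c}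
      ⊆ ⋃ T ∈ s.powersetCard (n / 2), {ω : V → ℝ | ∀ x ∈ T, ω x < a} := by
    intro ω hω
    simp only [Set.mem_setOf_eq] at hω
    have hc : 0 < c := by
      by_contra hc
      rw [ENNReal.ofReal_eq_zero.mpr (not_lt.mp hc)] at hω
      exact (not_lt.mpr zero_le) hω
    set T₀ := s.filter (fun x => ω x < a) with hT₀
    have hcard : n / 2 ≤ T₀.card := by
      by_contra hcard
      push_neg at hcard
      have hnpos : 0 < n := by omega
      have hapos : 0 < a := by
        rw [ha]
        have : (0:ℝ) < n := by exact_mod_cast hnpos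
        positivity
      set U := s \ T₀ with hU
      have hUcard : U.card = n - T₀.card := by
        rw [hU, Finset.card_sdiff_of_subset (Finset.filter_subset _ _), hn]
      have hUreal : (n : ℝ) / 2 ≤ ((U.card : ℕ) : ℝ) := by
        have h1 : (T₀.card : ℝ) < (n : ℝ) / 2 := by
          calc (T₀.card : ℝ) < ((n / 2 : ℕ) : ℝ) := by exact_mod_cast hcard
            _ ≤ (n : ℝ) / 2 := by
                rw [le_div_iff₀ (by norm_num : (0:ℝ) < 2)]
                exact_mod_cast Nat.div_mul_le_self n 2
        have h2 : T₀.card ≤ n := hn ▸ Finset.card_filter_le _ _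
        rw [hUcard]
        push_cast [h2]
        linarith
      have hca : c ≤ ((U.card : ℕ) : ℝ) * a := by
        calc c = ((n : ℝ) / 2) * a := by
              rw [ha]
              have hn0 : (n:ℝ) ≠ 0 := by
                have : (0:ℝ) < n := by exact_mod_cast hnpos
                exact this.ne'
              field_simp
          _ ≤ ((U.card : ℕ) : ℝ) * a := mul_le_mul_of_nonneg_right hUreal hapos.le
      have hge : ENNReal.ofReal c ≤ ∑ x ∈ s, ENNReal.ofReal (ω x) := by
        calc ENNReal.ofReal c ≤ ENNReal.ofReal (((U.card : ℕ) : ℝ) * a) :=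
              ENNReal.ofReal_le_ofReal hca
          _ = ((U.card : ℕ) : ℝ≥0∞) * ENNReal.ofReal a := by
              rw [ENNReal.ofReal_mul (by positivity), ENNReal.ofReal_natCast]
          _ = ∑ _x ∈ U, ENNReal.ofReal a := by
              rw [Finset.sum_const, nsmul_eq_mul]
          _ ≤ ∑ x ∈ U, ENNReal.ofReal (ω x) := by
              refine Finset.sum_le_sum fun x hx => ?_
              refine ENNReal.ofReal_le_ofReal ?_
              have hmem := Finset.mem_sdiff.mp (hU ▸ hx)
              have hnl : ¬ (ω x < a) := by
                intro hlt
                exact hmem.2 (hT₀ ▸ Finset.mem_filter.mpr ⟨hmem.1, hlt⟩)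
              exact not_lt.mp hnl
          _ ≤ ∑ x ∈ s, ENNReal.ofReal (ω x) :=
              Finset.sum_le_sum_of_subset Finset.sdiff_subset
      exact absurd hω (not_lt.mpr hge)
    obtain ⟨T, hTsub, hTcard⟩ := Finset.exists_subset_card_eq hcard
    refine Set.mem_iUnion₂.mpr ⟨T, ?_, ?_⟩
    · exact Finset.mem_powersetCard.mpr ⟨hTsub.trans (Finset.filter_subset _ _), hTcard⟩
    · intro x hx
      have hmem := hTsub hx
      rw [hT₀, Finset.mem_filter] at hmem
      exact hmem.2
  calc μ {ω : V → ℝ | ∑ x ∈ s, ENNReal.ofReal (ω x) < ENNReal.ofReal c}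
      ≤ μ (⋃ T ∈ s.powersetCard (n / 2), {ω : V → ℝ | ∀ x ∈ T, ω x < a}) :=
        measure_mono hincl
    _ ≤ ∑ T ∈ s.powersetCard (n / 2), μ {ω : V → ℝ | ∀ x ∈ T, ω x < a} :=
        measure_biUnion_finset_le _ _
    _ ≤ ∑ _T ∈ s.powersetCard (n / 2), ENNReal.ofReal a ^ (n / 2) := by
        refine Finset.sum_le_sum fun T hT => ?_
        have h := hlow T a
        rwa [(Finset.mem_powersetCard.mp hT).2] at h
    _ = (s.powersetCard (n / 2)).card • (ENNReal.ofReal a ^ (n / 2)) :=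
        Finset.sum_const _
    _ ≤ 2 ^ n * ENNReal.ofReal a ^ (n / 2) := by
        rw [nsmul_eq_mul]
        refine mul_le_mul_left ?_ _
        rw [Finset.card_powersetCard, hn]
        have h1 : n.choose (n / 2) ≤ 2 ^ n :=
          calc n.choose (n / 2) ≤ ∑ m ∈ Finset.range (n + 1), n.choose m :=
                Finset.single_le_sum (fun i _ => Nat.zero_le _)
                  (Finset.mem_range.mpr (by omega))
            _ = 2 ^ n := Nat.sum_range_choose n
        exact_mod_cast Nat.cast_le.mpr h1

/-- The `n`-step reachable set. -/
def eden_reach {V : Type*} [DecidableEq V] (G : SimpleGraph V) [G.LocallyFinite] (o : V) :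
    ℕ → Finset V
  | 0 => {o}
  | n+1 => eden_reach G o n ∪ (eden_reach G o n).biUnion (fun v => G.neighborFinset v)

lemma eden_reach_mono {V : Type*} [DecidableEq V] (G : SimpleGraph V) [G.LocallyFinite]
    (o : V) {n m : ℕ} (h : n ≤ m) : eden_reach G o n ⊆ eden_reach G o m := by
  induction m with
  | zero => simp [Nat.le_zero.mp h]
  | succ m ih =>
    rcases Nat.lt_or_ge n (m+1) with h' | h'
    · exact (ih (by omega)).trans (by rw [eden_reach]; exact Finset.subset_union_left)
    · have heq : n = m + 1 := by omega
      subst heq; exact subset_rfl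

lemma eden_reach_card {V : Type*} [DecidableEq V] (G : SimpleGraph V) [G.LocallyFinite]
    (o : V) (Δ : ℕ) (hdeg : ∀ u : V, G.degree u = Δ) (n : ℕ) :
    (eden_reach G o n).card ≤ (Δ + 1) ^ n := by
  induction n with
  | zero => simp [eden_reach]
  | succ n ih =>
    rw [eden_reach]
    calc (eden_reach G o n ∪ (eden_reach G o n).biUnion (fun v => G.neighborFinset v)).card
        ≤ (eden_reach G o n).card
            + ((eden_reach G o n).biUnion (fun v => G.neighborFinset v)).card :=
          Finset.card_union_le _ _
      _ ≤ (eden_reach G o n).card + ∑ v ∈ eden_reach G o n, (G.neighborFinset v).card :=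
          Nat.add_le_add_left (Finset.card_biUnion_le) _
      _ = (eden_reach G o n).card + ∑ _v ∈ eden_reach G o n, Δ := by
          congr 1
          exact Finset.sum_congr rfl fun v _ => hdeg v
      _ = (eden_reach G o n).card * (1 + Δ) := by
          rw [Finset.sum_const, smul_eq_mul]; ring
      _ ≤ (Δ + 1) ^ n * (1 + Δ) := Nat.mul_le_mul_right _ ih
      _ = (Δ + 1) ^ (n + 1) := by ring

lemma eden_reach_end {V : Type*} [DecidableEq V] (G : SimpleGraph V) [G.LocallyFinite]
    (o : V) : ∀ {u v : V} (p : G.Walk u v) (n : ℕ), u ∈ eden_reach G o n →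
      v ∈ eden_reach G o (n + p.length) := by
  intro u v p
  induction p with
  | nil => intro n h; simpa using h
  | @cons u w v hadj q ih =>
    intro n hu
    have hw : w ∈ eden_reach G o (n + 1) := by
      rw [eden_reach]
      refine Finset.mem_union_right _ (Finset.mem_biUnion.mpr ⟨u, hu, ?_⟩)
      exact (SimpleGraph.mem_neighborFinset _ _ _).mpr hadj
    have hih := ih (n+1) hw
    have heq : n + 1 + q.length = n + (SimpleGraph.Walk.cons hadj q).length := by
      rw [SimpleGraph.Walk.length_cons]; omega
    rwa [heq] at hih

lemma eden_reach_end' {V : Type*} [DecidableEq V] (G : SimpleGraph V) [G.LocallyFinite]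
    (o v : V) (p : G.Walk o v) {n : ℕ} (h : p.length ≤ n) : v ∈ eden_reach G o n := by
  have h0 : o ∈ eden_reach G o 0 := by simp [eden_reach]
  have h1 := eden_reach_end G o p 0 h0
  rw [zero_add] at h1
  exact eden_reach_mono G o h h1

lemma eden_walk_count {V : Type*} [DecidableEq V] (G : SimpleGraph V) [G.LocallyFinite]
    (Δ : ℕ) (hdeg : ∀ u : V, G.degree u = Δ) :
    ∀ (n : ℕ) (u : V) (S : Finset V),
      (∑ v ∈ S, (G.finsetWalkLength n u v).card) ≤ Δ ^ n := by
  intro n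
  induction n with
  | zero =>
    intro u S
    have h0 : ∀ v ∈ S, (G.finsetWalkLength 0 u v).card ≤ if v = u then 1 else 0 := by
      intro v _
      split
      · next h =>
        subst h
        refine Finset.card_le_one.mpr fun p hp q hq => ?_
        rw [SimpleGraph.mem_finsetWalkLength_iff] at hp hq
        rw [SimpleGraph.Walk.nil_iff_eq_nil.mp (SimpleGraph.Walk.length_eq_zero_iff.mp hp), SimpleGraph.Walk.nil_iff_eq_nil.mp (SimpleGraph.Walk.length_eq_zero_iff.mp hq)]
      · next h =>
        simp only [Nat.le_zero, Finset.card_eq_zero]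
        rw [Finset.eq_empty_iff_forall_notMem]
        intro p hp
        rw [SimpleGraph.mem_finsetWalkLength_iff] at hp
        exact h (SimpleGraph.Walk.eq_of_length_eq_zero hp).symm
    calc ∑ v ∈ S, (G.finsetWalkLength 0 u v).card
        ≤ ∑ v ∈ S, if v = u then 1 else 0 := Finset.sum_le_sum h0
      _ ≤ 1 := by rw [Finset.sum_ite_eq' S u (fun _ => 1)]; split <;> simp
      _ = Δ ^ 0 := (pow_zero Δ).symm
  | succ n ih =>
    intro u S
    have hv : ∀ v, (G.finsetWalkLength (n+1) u v).card
        ≤ ∑ w : G.neighborSet u, (G.finsetWalkLength n w v).card := by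
      intro v
      have hdef : G.finsetWalkLength (n+1) u v =
          Finset.univ.biUnion fun (w : G.neighborSet u) =>
            (G.finsetWalkLength n w v).map
              ⟨fun p => SimpleGraph.Walk.cons w.property p, fun _ _ => by intro h; cases h; rfl⟩ := rfl
      rw [hdef]
      calc _ ≤ ∑ w : G.neighborSet u, ((G.finsetWalkLength n w v).map _).card :=
            Finset.card_biUnion_le
        _ = ∑ w : G.neighborSet u, (G.finsetWalkLength n w v).card := by
            simp [Finset.card_map]
    calc ∑ v ∈ S, (G.finsetWalkLength (n+1) u v).card
        ≤ ∑ v ∈ S, ∑ w : G.neighborSet u, (G.finsetWalkLength n w v).card :=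
          Finset.sum_le_sum fun v _ => hv v
      _ = ∑ w : G.neighborSet u, ∑ v ∈ S, (G.finsetWalkLength n w v).card := Finset.sum_comm
      _ ≤ ∑ _w : G.neighborSet u, Δ ^ n := Finset.sum_le_sum fun w _ => ih w S
      _ = (G.degree u) * Δ ^ n := by
          rw [Finset.sum_const, smul_eq_mul, ← SimpleGraph.card_neighborSet_eq_degree]
          rfl
      _ = Δ ^ (n + 1) := by rw [hdeg u]; ring

lemma eden_bypass_time_le {V : Type*} [DecidableEq V] {G : SimpleGraph V} {o v : V}
    (ω : V → ℝ) (p : G.Walk o v) : walkTime ω p.bypass ≤ walkTime ω p := by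
  have hnodup : p.bypass.support.Nodup := (p.bypass_isPath).support_nodup
  have htail : p.bypass.support.tail.Nodup := hnodup.tail
  have hsub : p.bypass.support.tail ⊆ p.support.tail := by
    intro x hx
    have hx1 : x ∈ p.bypass.support := List.mem_of_mem_tail hx
    have hx2 : x ∈ p.support := p.support_bypass_subset hx1
    rw [p.support_eq_cons] at hx2
    rcases List.mem_cons.mp hx2 with h | h
    · exfalso
      subst h
      have hco := p.bypass.support_eq_cons
      rw [hco] at hnodup
      exact (List.nodup_cons.mp hnodup).1 hx
    · exact h
  obtain ⟨l, hperm, hsubl⟩ := List.subperm_of_subset htail hsub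
  unfold walkTime
  calc (p.bypass.support.tail.map fun x => ENNReal.ofReal (ω x)).sum
      = (l.map fun x => ENNReal.ofReal (ω x)).sum := (hperm.map _).sum_eq.symm
    _ ≤ (p.support.tail.map fun x => ENNReal.ofReal (ω x)).sum :=
        (hsubl.map _).sum_le_sum (fun a _ => zero_le)

lemma eden_walkTime_meas {V : Type*} {G : SimpleGraph V} {o v : V} (p : G.Walk o v) :
    Measurable (fun ω : V → ℝ => walkTime ω p) := by
  unfold walkTime
  generalize p.support.tail = l
  induction l with
  | nil => simp only [List.map_nil, List.sum_nil]; exact measurable_const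
  | cons a l ih =>
    simp only [List.map_cons, List.sum_cons]
    exact (ENNReal.measurable_ofReal.comp (measurable_pi_apply a)).add ih

lemma eden_path_bound {V : Type*} [DecidableEq V] {G : SimpleGraph V}
    (μ : Measure (V → ℝ)) [IsProbabilityMeasure μ]
    (hsmall : ∀ (s : Finset V) (n : ℕ), s.card = n → ∀ c : ℝ,
      μ {ω : V → ℝ | ∑ x ∈ s, ENNReal.ofReal (ω x) < ENNReal.ofReal c}
        ≤ 2 ^ n * ENNReal.ofReal (2 * c / n) ^ (n / 2))
    {o v : V} (p : G.Walk o v) (hp : p.IsPath) (c : ℝ) :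
    μ {ω : V → ℝ | walkTime ω p < ENNReal.ofReal c}
      ≤ 2 ^ p.length * ENNReal.ofReal (2 * c / p.length) ^ (p.length / 2) := by
  have htail : p.support.tail.Nodup := hp.support_nodup.tail
  set s := p.support.tail.toFinset with hs
  have hcard : s.card = p.length := by
    rw [hs, List.toFinset_card_of_nodup htail, List.length_tail, p.length_support]
    rfl
  have hEq : {ω : V → ℝ | walkTime ω p < ENNReal.ofReal c}
      = {ω : V → ℝ | ∑ x ∈ s, ENNReal.ofReal (ω x) < ENNReal.ofReal c} := by
    ext ω
    simp only [Set.mem_setOf_eq]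
    rw [show walkTime ω p = ∑ x ∈ s, ENNReal.ofReal (ω x) from
      (List.sum_toFinset _ htail).symm]
  rw [hEq]
  exact hsmall s p.length hcard c

lemma eden_geom_bound (Δ : ℕ) (hΔ : 1 ≤ Δ) (c : ℝ) (hc : 1 ≤ c) (n : ℕ)
    (hnc : 32 * (Δ:ℝ)^2 * c ≤ n) :
    (Δ:ℝ≥0∞)^n * 2^n * ENNReal.ofReal (2*c/n)^(n/2) ≤ 4 * Δ * 2⁻¹^n := by
  have hΔR : (1:ℝ) ≤ (Δ:ℝ) := by exact_mod_cast hΔ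
  have hn1 : 1 ≤ n := by
    have h : (1:ℝ) ≤ (n:ℝ) := le_trans (by nlinarith) hnc
    exact_mod_cast h
  have hnR : (0:ℝ) < n := by positivity
  have h1 : 2*c/n ≤ 1/(16*(Δ:ℝ)^2) := by
    rw [div_le_div_iff₀ hnR (by positivity)]
    nlinarith
  set k := n / 2 with hk
  have hk1 : n ≤ 2*k + 1 := by omega
  calc (Δ:ℝ≥0∞)^n * 2^n * ENNReal.ofReal (2*c/n)^(n/2)
      ≤ (Δ:ℝ≥0∞)^n * 2^n * ENNReal.ofReal (1/(16*(Δ:ℝ)^2))^k :=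
        mul_le_mul_right (pow_le_pow_left' (ENNReal.ofReal_le_ofReal h1) _) _
    _ = (2*(Δ:ℝ≥0∞))^n * ENNReal.ofReal (1/(16*(Δ:ℝ)^2))^k := by
        rw [mul_pow]; ring
    _ ≤ (2*(Δ:ℝ≥0∞))^(2*k+1) * ENNReal.ofReal (1/(16*(Δ:ℝ)^2))^k := by
        refine mul_le_mul_left (pow_le_pow_right₀ ?_ hk1) _
        have hΔE : (1:ℝ≥0∞) ≤ (Δ:ℝ≥0∞) := by exact_mod_cast hΔ
        calc (1:ℝ≥0∞) ≤ 2 := by norm_num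
          _ = 2 * 1 := by ring
          _ ≤ 2 * (Δ:ℝ≥0∞) := mul_le_mul_right hΔE 2
    _ = 2*(Δ:ℝ≥0∞) * (((2*(Δ:ℝ≥0∞))^2 * ENNReal.ofReal (1/(16*(Δ:ℝ)^2)))^k) := by
        rw [mul_pow, pow_add, pow_mul, pow_one]; ring
    _ = 2*(Δ:ℝ≥0∞) * ((ENNReal.ofReal (1/4))^k) := by
        congr 2
        have hcast : (2*(Δ:ℝ≥0∞))^2 = ENNReal.ofReal ((2*(Δ:ℝ))^2) := by
          rw [← ENNReal.ofReal_natCast Δ, ← ENNReal.ofReal_ofNat 2,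
            ← ENNReal.ofReal_mul (by norm_num), ← ENNReal.ofReal_pow (by positivity)]
        rw [hcast, ← ENNReal.ofReal_mul (by positivity)]
        congr 1
        field_simp
        ring
    _ ≤ 2*(Δ:ℝ≥0∞) * (2⁻¹^(n-1)) := by
        refine mul_le_mul_right ?_ _
        have h4 : ENNReal.ofReal (1/4) = (2⁻¹ : ℝ≥0∞)^2 := by
          rw [show (1/4 : ℝ) = (4:ℝ)⁻¹ by norm_num,
            ENNReal.ofReal_inv_of_pos (by norm_num), ENNReal.ofReal_ofNat,
            show (4:ℝ≥0∞) = 2^2 by norm_num, ← ENNReal.inv_pow]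
        rw [h4, ← pow_mul]
        exact pow_le_pow_of_le_one zero_le (by simp) (by omega)
    _ = 4 * (Δ:ℝ≥0∞) * 2⁻¹^n := by
        have hsplit : n = (n-1) + 1 := by omega
        have h2 : (2:ℝ≥0∞) * 2⁻¹ = 1 := ENNReal.mul_inv_cancel (by norm_num) (by norm_num)
        have key : (2:ℝ≥0∞) * 2⁻¹ ^ n = 2⁻¹^(n-1) := by
          conv_lhs => rw [hsplit]
          rw [pow_succ, mul_comm ((2:ℝ≥0∞)⁻¹^(n-1)) 2⁻¹, ← mul_assoc, h2, one_mul]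
        rw [← key]
        ring

theorem eden_size_exponential_bound {V : Type*}
    (G : SimpleGraph V) (hinf : Infinite V)
    (hlf : ∀ v : V, (G.neighborSet v).Finite) (hconn : G.Connected)
    (htrans : VertexTransitive G) (o : V)
    (μ : Measure (V → ℝ)) [IsProbabilityMeasure μ]
    (hdist : ∀ v : V, μ.map (fun ω => ω v) = expMeasure 1)
    (hindep : iIndepFun (fun v => fun ω : V → ℝ => ω v) μ) :
    ∃ D : ℝ, 0 < D ∧
      Tendsto (fun t : ℝ =>
          μ {ω | (infected G o ω t).encard ≤ ENNReal.ofReal (D ^ t)})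
        atTop (nhds 1) := by
  classical
  haveI : G.LocallyFinite := fun v => (hlf v).fintype
  -- the common degree
  obtain ⟨v0, hv0⟩ := exists_ne o
  have hadj : ∃ w, G.Adj o w := by
    obtain ⟨p⟩ := hconn.preconnected o v0
    cases p with
    | nil => exact absurd rfl hv0
    | cons h q => exact ⟨_, h⟩
  set Δ := G.degree o with hΔdef
  have hΔ1 : 1 ≤ Δ := (G.degree_pos_iff_exists_adj o).mpr hadj
  have hdeg : ∀ u : V, G.degree u = Δ := by
    intro u
    obtain ⟨φ, hφ⟩ := htrans o u
    have e : G.neighborSet o ≃ G.neighborSet u := hφ ▸ φ.mapNeighborSet o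
    calc G.degree u = Fintype.card (G.neighborSet u) :=
          (G.card_neighborSet_eq_degree u).symm
      _ = Fintype.card (G.neighborSet o) := Fintype.card_congr e.symm
      _ = G.degree o := G.card_neighborSet_eq_degree o
  -- probability tools
  have hlow := eden_low_measure μ hdist hindep
  have hsmall : ∀ (s : Finset V) (n : ℕ), s.card = n → ∀ c : ℝ,
      μ {ω : V → ℝ | ∑ x ∈ s, ENNReal.ofReal (ω x) < ENNReal.ofReal c}
        ≤ 2 ^ n * ENNReal.ofReal (2 * c / n) ^ (n / 2) :=
    fun s n hn c => eden_sum_small_bound μ hlow s n hn c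
  -- bad events
  set bad : ℕ → ℝ → Set (V → ℝ) := fun n c =>
    ⋃ v ∈ eden_reach G o n, ⋃ p ∈ (G.finsetWalkLength n o v).filter (fun q => q.IsPath),
      {ω : V → ℝ | walkTime ω p < ENNReal.ofReal c} with hbad_def
  have hbad_meas : ∀ (n : ℕ) (c : ℝ), MeasurableSet (bad n c) := by
    intro n c
    refine MeasurableSet.biUnion (Finset.countable_toSet _) fun v _ => ?_
    refine MeasurableSet.biUnion (Finset.countable_toSet _) fun p _ => ?_
    exact measurableSet_lt (eden_walkTime_meas p) measurable_const
  have hbad_le : ∀ (n : ℕ) (c : ℝ),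
      μ (bad n c) ≤ (Δ:ℝ≥0∞)^n * 2^n * ENNReal.ofReal (2*c/n)^(n/2) := by
    intro n c
    calc μ (bad n c)
        ≤ ∑ v ∈ eden_reach G o n,
            μ (⋃ p ∈ (G.finsetWalkLength n o v).filter (fun q => q.IsPath),
              {ω : V → ℝ | walkTime ω p < ENNReal.ofReal c}) :=
          measure_biUnion_finset_le _ _
      _ ≤ ∑ v ∈ eden_reach G o n,
            ∑ p ∈ (G.finsetWalkLength n o v).filter (fun q => q.IsPath),
              μ {ω : V → ℝ | walkTime ω p < ENNReal.ofReal c} :=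
          Finset.sum_le_sum fun v _ => measure_biUnion_finset_le _ _
      _ ≤ ∑ v ∈ eden_reach G o n,
            ∑ _p ∈ (G.finsetWalkLength n o v).filter (fun q => q.IsPath),
              (2^n * ENNReal.ofReal (2*c/n)^(n/2)) := by
          refine Finset.sum_le_sum fun v _ => Finset.sum_le_sum fun p hp => ?_
          have hmem := Finset.mem_filter.mp hp
          have hlen : p.length = n := SimpleGraph.mem_finsetWalkLength_iff.mp hmem.1
          have hb := eden_path_bound μ hsmall p hmem.2 c
          rwa [hlen] at hb
      _ = ∑ v ∈ eden_reach G o n,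
            (((G.finsetWalkLength n o v).filter (fun q => q.IsPath)).card : ℝ≥0∞)
              * (2^n * ENNReal.ofReal (2*c/n)^(n/2)) := by
          refine Finset.sum_congr rfl fun v _ => ?_
          rw [Finset.sum_const, nsmul_eq_mul]
      _ ≤ (Δ:ℝ≥0∞)^n * (2^n * ENNReal.ofReal (2*c/n)^(n/2)) := by
          rw [← Finset.sum_mul]
          refine mul_le_mul_left ?_ _
          have hcount : ∑ v ∈ eden_reach G o n,
              ((G.finsetWalkLength n o v).filter (fun q => q.IsPath)).card ≤ Δ^n :=
            le_trans
              (Finset.sum_le_sum fun v _ =>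
                Finset.card_le_card (Finset.filter_subset _ _))
              (eden_walk_count G Δ hdeg n o (eden_reach G o n))
          calc ∑ v ∈ eden_reach G o n,
                (((G.finsetWalkLength n o v).filter (fun q => q.IsPath)).card : ℝ≥0∞)
              = ((∑ v ∈ eden_reach G o n,
                  ((G.finsetWalkLength n o v).filter (fun q => q.IsPath)).card : ℕ) : ℝ≥0∞) := by
                rw [Nat.cast_sum]
            _ ≤ (((Δ^n : ℕ)) : ℝ≥0∞) := by exact_mod_cast hcount
            _ = (Δ:ℝ≥0∞)^n := by push_cast; ring
      _ = (Δ:ℝ≥0∞)^n * 2^n * ENNReal.ofReal (2*c/n)^(n/2) := by ring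
  -- cutoff scales
  set mf : ℝ → ℕ := fun t => ⌈32*(Δ:ℝ)^2*(t+1)⌉₊ with hmf_def
  set Bad : ℝ → Set (V → ℝ) := fun t => ⋃ j : ℕ, bad (mf t + j) (t+1) with hBad_def
  have hBad_meas : ∀ t : ℝ, MeasurableSet (Bad t) :=
    fun t => MeasurableSet.iUnion fun j => hbad_meas _ _
  have hBad_le : ∀ t : ℝ, 1 ≤ t → μ (Bad t) ≤ 8 * Δ * 2⁻¹ ^ (mf t) := by
    intro t ht
    have hc1 : (1:ℝ) ≤ t + 1 := by linarith
    have hterm : ∀ j : ℕ, μ (bad (mf t + j) (t+1)) ≤ 4 * Δ * 2⁻¹ ^ (mf t + j) := by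
      intro j
      refine le_trans (hbad_le (mf t + j) (t+1)) ?_
      refine eden_geom_bound Δ hΔ1 (t+1) hc1 (mf t + j) ?_
      calc 32*(Δ:ℝ)^2*(t+1) ≤ (mf t : ℝ) := Nat.le_ceil _
        _ ≤ ((mf t + j : ℕ) : ℝ) := by exact_mod_cast Nat.le_add_right _ _
    calc μ (Bad t) ≤ ∑' j : ℕ, μ (bad (mf t + j) (t+1)) := measure_iUnion_le _
      _ ≤ ∑' j : ℕ, 4 * (Δ:ℝ≥0∞) * 2⁻¹ ^ (mf t + j) := ENNReal.tsum_le_tsum hterm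
      _ = 4 * Δ * 2⁻¹ ^ (mf t) * ∑' j : ℕ, 2⁻¹ ^ j := by
          rw [← ENNReal.tsum_mul_left]
          congr 1
          funext j
          rw [pow_add]
          ring
      _ = 8 * Δ * 2⁻¹ ^ (mf t) := by
          rw [ENNReal.tsum_geometric, ENNReal.one_sub_inv_two, inv_inv]
          ring
  -- the constant
  set E : ℕ := 65 * Δ^2 with hE_def
  refine ⟨((Δ:ℝ)+1)^E, by positivity, ?_⟩
  -- good event inclusion
  have hgood : ∀ t : ℝ, 1 ≤ t → (Bad t)ᶜ ⊆
      {ω : V → ℝ | ((infected G o ω t).encard : ℝ≥0∞)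
        ≤ ENNReal.ofReal ((((Δ:ℝ)+1)^E) ^ t)} := by
    intro t ht ω hω
    have hsubset : infected G o ω t ⊆ ↑(eden_reach G o (mf t)) := by
      intro v hv
      have hv' : infectionTime G o ω v < ENNReal.ofReal (t+1) := by
        refine lt_of_le_of_lt hv ?_
        exact (ENNReal.ofReal_lt_ofReal_iff (by linarith)).mpr (by linarith)
      obtain ⟨p, hp⟩ := iInf_lt_iff.mp hv'
      have hq : walkTime ω p.bypass < ENNReal.ofReal (t+1) :=
        lt_of_le_of_lt (eden_bypass_time_le ω p) hp
      rcases le_or_gt (mf t) p.bypass.length with hlen | hlen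
      · exfalso
        apply hω
        have hmem : ω ∈ bad p.bypass.length (t+1) := by
          rw [hbad_def]
          refine Set.mem_iUnion₂.mpr ⟨v, eden_reach_end' G o v p.bypass le_rfl, ?_⟩
          refine Set.mem_iUnion₂.mpr ⟨p.bypass, ?_, hq⟩
          exact Finset.mem_filter.mpr
            ⟨SimpleGraph.mem_finsetWalkLength_iff.mpr rfl, p.bypass_isPath⟩
        rw [hBad_def]
        exact Set.mem_iUnion.mpr ⟨p.bypass.length - mf t,
          by rwa [show mf t + (p.bypass.length - mf t) = p.bypass.length by omega]⟩
      · exact Finset.mem_coe.mpr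
          (eden_reach_mono G o hlen.le (eden_reach_end' G o v p.bypass le_rfl))
    have hcard1 : (infected G o ω t).encard ≤ ((eden_reach G o (mf t)).card : ℕ∞) :=
      (Set.encard_mono hsubset).trans_eq (Set.encard_coe_eq_coe_finsetCard _)
    have hreal : ((Δ:ℝ)+1)^(mf t : ℕ) ≤ (((Δ:ℝ)+1)^E) ^ t := by
      have hb : (1:ℝ) ≤ (Δ:ℝ)+1 := by
        have : (0:ℝ) ≤ (Δ:ℝ) := Nat.cast_nonneg Δ
        linarith
      have hΔR : (1:ℝ) ≤ (Δ:ℝ) := by exact_mod_cast hΔ1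
      have hm_le : ((mf t : ℕ) : ℝ) ≤ (E : ℝ) * t := by
        have h1 : ((mf t : ℕ) : ℝ) < 32*(Δ:ℝ)^2*(t+1) + 1 :=
          Nat.ceil_lt_add_one (by nlinarith)
        have h2 : (E : ℝ) = 65 * (Δ:ℝ)^2 := by rw [hE_def]; push_cast; ring
        rw [h2]
        nlinarith
      calc ((Δ:ℝ)+1)^(mf t : ℕ) = ((Δ:ℝ)+1) ^ (((mf t : ℕ) : ℝ)) :=
            (Real.rpow_natCast _ _).symm
        _ ≤ ((Δ:ℝ)+1) ^ ((E : ℝ) * t) := Real.rpow_le_rpow_of_exponent_le hb hm_le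
        _ = (((Δ:ℝ)+1) ^ ((E : ℕ) : ℝ)) ^ t := by
            rw [← Real.rpow_mul (by linarith)]
        _ = (((Δ:ℝ)+1)^E) ^ t := by rw [Real.rpow_natCast]
    have hcard2 : (((eden_reach G o (mf t)).card : ℕ) : ℝ≥0∞)
        ≤ ENNReal.ofReal ((((Δ:ℝ)+1)^E) ^ t) := by
      calc (((eden_reach G o (mf t)).card : ℕ) : ℝ≥0∞)
          ≤ (((Δ+1)^(mf t) : ℕ) : ℝ≥0∞) := by
            exact_mod_cast eden_reach_card G o Δ hdeg (mf t)
        _ = ENNReal.ofReal ((((Δ+1)^(mf t) : ℕ) : ℝ)) := (ENNReal.ofReal_natCast _).symm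
        _ = ENNReal.ofReal (((Δ:ℝ)+1)^(mf t : ℕ)) := by push_cast; ring_nf
        _ ≤ ENNReal.ofReal ((((Δ:ℝ)+1)^E) ^ t) := ENNReal.ofReal_le_ofReal hreal
    refine Set.mem_setOf_eq ▸ ?_
    calc ((infected G o ω t).encard : ℝ≥0∞)
        ≤ (((eden_reach G o (mf t)).card : ℕ∞) : ℝ≥0∞) := by exact_mod_cast hcard1
      _ = (((eden_reach G o (mf t)).card : ℕ) : ℝ≥0∞) := by exact_mod_cast rfl
      _ ≤ ENNReal.ofReal ((((Δ:ℝ)+1)^E) ^ t) := hcard2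
  -- convergence
  have heps : Tendsto (fun t : ℝ => 8 * (Δ:ℝ≥0∞) * 2⁻¹ ^ (mf t)) atTop (nhds 0) := by
    have hmf : Tendsto mf atTop atTop := by
      rw [hmf_def]
      refine tendsto_nat_ceil_atTop.comp ?_
      refine Tendsto.const_mul_atTop (by positivity) ?_
      exact tendsto_atTop_add_const_right _ 1 tendsto_id
    have hpow : Tendsto (fun n : ℕ => (2⁻¹ : ℝ≥0∞) ^ n) atTop (nhds 0) :=
      ENNReal.tendsto_pow_atTop_nhds_zero_of_lt_one
        (ENNReal.inv_lt_one.mpr (by norm_num))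
    have hcm := ENNReal.Tendsto.const_mul (a := 8 * (Δ:ℝ≥0∞)) (hpow.comp hmf)
      (Or.inr (by simp [ENNReal.mul_eq_top]))
    simpa using hcm
  have hlower : Tendsto (fun t : ℝ => 1 - 8 * (Δ:ℝ≥0∞) * 2⁻¹ ^ (mf t)) atTop (nhds 1) := by
    have h := ENNReal.Tendsto.sub (tendsto_const_nhds (x := (1:ℝ≥0∞)) (f := atTop))
      heps (Or.inl ENNReal.one_ne_top)
    simpa using h
  refine tendsto_of_tendsto_of_tendsto_of_le_of_le' hlower tendsto_const_nhds ?_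
    (Eventually.of_forall fun t => prob_le_one)
  filter_upwards [eventually_ge_atTop (1:ℝ)] with t ht
  calc 1 - 8 * (Δ:ℝ≥0∞) * 2⁻¹ ^ (mf t) ≤ 1 - μ (Bad t) :=
        tsub_le_tsub_left (hBad_le t ht) 1
    _ = μ ((Bad t)ᶜ) := (prob_compl_eq_one_sub (hBad_meas t)).symm
    _ ≤ μ {ω | ((infected G o ω t).encard : ℝ≥0∞)
          ≤ ENNReal.ofReal ((((Δ:ℝ)+1)^E) ^ t)} := measure_mono (hgood t ht)
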